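/- For a 0-1 permutation matrix T, the loss L = λ₁ Σ_i (Σ_j T_{i,j} − 1)² + λ₂ Σ_i H_{i,i} + Σ_{i,j} D_{i,j} H_{i,j} (with n ≥ 2, H = T V T^T, V the cyclic shift, λ₁, λ₂ > 0, D the distance matrix) equals exactly the tour length Σ_{k} D_{τ(k), τ(σ(k))}, where τ is the permutation of T and σ(k) = (k mod n)+1; in particular the first two penalty terms vanish. -/
import Mathlib


open Matrix

/-- For `n ≥ 2`, `T` the permutation matrix of `τ`,
`H = T * V * Tᵀ` with `V` the cyclic shift, and `λ₁, λ₂ > 0`, the UTSP loss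
`λ₁ * ∑ i (∑ j T i j − 1)² + λ₂ * ∑ i H i i + ∑ i j D i j * H i j` equals
exactly the tour length `∑ k, D (τ k) (τ (k+1))`; in particular the two penalty
terms vanish. -/
theorem stmt_12 (n : ℕ) [NeZero n] (hn : 2 ≤ n)
    (D : Matrix (Fin n) (Fin n) ℝ) (lam1 lam2 : ℝ)
    (hlam1 : 0 < lam1) (hlam2 : 0 < lam2)
    (τ : Equiv.Perm (Fin n))
    (T : Matrix (Fin n) (Fin n) ℝ)
    (hT : ∀ i j, T i j = if i = τ j then 1 else 0)
    (V : Matrix (Fin n) (Fin n) ℝ)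
    (hV : ∀ i j, V i j = if j = i + 1 then 1 else 0)
    (H : Matrix (Fin n) (Fin n) ℝ)
    (hH : H = T * V * Tᵀ) :
    lam1 * ∑ i, (∑ j, T i j - 1) ^ 2 + lam2 * ∑ i, H i i
        + ∑ i, ∑ j, D i j * H i j
      = ∑ k, D (τ k) (τ (k + 1)) := by
  have key : ∀ (i x : Fin n), (i = τ x) ↔ (x = τ.symm i) := by
    intro i x; constructor <;> intro h <;> simp [h]
  have hHij : ∀ i j, H i j = if τ.symm j = τ.symm i + 1 then 1 else 0 := by
    intro i j
    subst hH
    simp only [mul_apply, transpose_apply, hT, hV, key]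
    simp only [ite_mul, one_mul, zero_mul, mul_ite, mul_one, mul_zero,
      Finset.sum_ite_eq', Finset.mem_univ, if_true]
    have : ∀ x : Fin n, (if τ.symm j = x + 1 then (if x = τ.symm i then (1:ℝ) else 0) else 0)
        = if x = τ.symm i then (if τ.symm j = τ.symm i + 1 then 1 else 0) else 0 := by
      intro x; by_cases hx : x = τ.symm i <;> simp [hx]
    simp [this, Finset.sum_ite_eq']
  have hrow : ∀ i, ∑ j, T i j = 1 := by
    intro i
    simp only [hT, key, Finset.sum_ite_eq', Finset.mem_univ, if_true]
  have hdiag : ∀ i, H i i = 0 := by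
    intro i
    rw [hHij, if_neg]
    intro h
    have h3 : (0 : Fin n) = 1 := add_left_cancel (a := τ.symm i) (by simpa using h)
    have := congrArg Fin.val h3
    simp [Fin.val_one'] at this
    omega
  have key2 : ∀ (x j : Fin n), (τ.symm j = x) ↔ (j = τ x) := by
    intro x j; rw [Equiv.symm_apply_eq τ, eq_comm]
  have hthird : ∀ i, ∑ j, D i j * H i j = D i (τ (τ.symm i + 1)) := by
    intro i
    simp only [hHij, key2, mul_ite, mul_one, mul_zero, Finset.sum_ite_eq',
      Finset.mem_univ, if_true]
  simp only [hrow, hdiag, hthird, sub_self, Finset.sum_const_zero, mul_zero,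
    zero_add, ne_eq, OfNat.ofNat_ne_zero, not_false_eq_true, zero_pow]
  rw [← Equiv.sum_comp τ (fun i => D i (τ (τ.symm i + 1)))]
  simp
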